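/- Let (V, Q) be an algebraic closure system satisfying (I₀). Then the lattice D(V, Q) of decompositions is a complete sublattice of the partition lattice Part(V) if and only if Q satisfies (I₁): A, B ∈ Q with A ∩ B ≠ ∅ implies A ∪ B ∈ Q. -/
import Mathlib


variable {V : Type*}

/-- `Q` is a closure system on `V`: it contains `V` and is closed under
intersections of nonempty subfamilies. -/
def IsClosureSystem (Q : Set (Set V)) : Prop :=
  Set.univ ∈ Q ∧ ∀ F ⊆ Q, F.Nonempty → ⋂₀ F ∈ Q

/-- Algebraic: the union of any nonempty chain of closed sets is closed. -/
def IsAlgebraicSystem (Q : Set (Set V)) : Prop :=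
  ∀ C ⊆ Q, C.Nonempty → IsChain (· ⊆ ·) C → ⋃₀ C ∈ Q

/-- Condition (I₀): the empty set and all singletons are closed. -/
def CondI0 (Q : Set (Set V)) : Prop := ∅ ∈ Q ∧ ∀ x : V, {x} ∈ Q

/-- Condition (I₁): the union of two intersecting members is a member. -/
def CondI1 (Q : Set (Set V)) : Prop :=
  ∀ A ∈ Q, ∀ B ∈ Q, (A ∩ B).Nonempty → A ∪ B ∈ Q

/-- Condition (I₂): differences of properly overlapping members are members. -/
def CondI2 (Q : Set (Set V)) : Prop :=
  ∀ A ∈ Q, ∀ B ∈ Q, (A ∩ B).Nonempty → ¬ A ⊆ B → ¬ B ⊆ A → A \ B ∈ Q ∧ B \ A ∈ Q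

/-- An interval system: an algebraic closure system satisfying (I₀), (I₁), (I₂). -/
def IsIntervalSystem (Q : Set (Set V)) : Prop :=
  IsClosureSystem Q ∧ IsAlgebraicSystem Q ∧ CondI0 Q ∧ CondI1 Q ∧ CondI2 Q

/-- `A` is a strong set of the closure system `Q`. -/
def IsStrong (Q : Set (Set V)) (A : Set V) : Prop :=
  A ∈ Q ∧ ∀ B ∈ Q, (A ∩ B).Nonempty → A ⊆ B ∨ B ⊆ A

/-- A decomposition: a partition of `V` (coded as a setoid) all of whose
blocks belong to `Q`.  The refinement order on partitions corresponds to the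
order on `Setoid V` (finer below). -/
def IsDecomp (Q : Set (Set V)) (π : Setoid V) : Prop :=
  ∀ x : V, {y | π.r x y} ∈ Q

/-- The lattice `D(V,Q)` of decompositions, as a subtype of `Setoid V`
with the induced (refinement) partial order. -/
abbrev Decomp (Q : Set (Set V)) := {π : Setoid V // IsDecomp Q π}

/-- The setoid whose only nontrivial block is `A`. -/
def blockSetoid (A : Set V) : Setoid V :=
  ⟨fun x y => x = y ∨ (x ∈ A ∧ y ∈ A),
   ⟨fun _ => Or.inl rfl,
    fun h => h.elim (fun e => Or.inl e.symm) (fun h => Or.inr ⟨h.2, h.1⟩),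
    fun h1 h2 => by
      rcases h1 with rfl | h1
      · exact h2
      · rcases h2 with rfl | h2
        · exact Or.inr h1
        · exact Or.inr ⟨h1.1, h2.2⟩⟩⟩

theorem blockSetoid_decomp {Q : Set (Set V)} (h0 : CondI0 Q) {A : Set V} (hA : A ∈ Q) :
    IsDecomp Q (blockSetoid A) := by
  intro x
  by_cases hx : x ∈ A
  · have : {y | (blockSetoid A).r x y} = A := by
      ext y
      simp only [blockSetoid, Set.mem_setOf_eq]
      constructor
      · rintro (rfl | h)
        · exact hx
        · exact h.2
      · exact fun hy => Or.inr ⟨hx, hy⟩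
    rw [this]; exact hA
  · have : {y | (blockSetoid A).r x y} = {x} := by
      ext y
      simp only [blockSetoid, Set.mem_setOf_eq, Set.mem_singleton_iff]
      constructor
      · rintro (rfl | h)
        · rfl
        · exact absurd h.1 hx
      · rintro rfl; exact Or.inl rfl
    rw [this]; exact h0.2 x

/-- For an algebraic closure system satisfying (I₀), the decomposition
lattice `D(V,Q)` is a complete sublattice of the partition lattice
`Part(V) = Setoid V` (i.e. it is closed under arbitrary joins and meets of
partitions) if and only if `Q` satisfies (I₁). -/
theorem stmt5 (Q : Set (Set V)) (hC : IsClosureSystem Q) (hA : IsAlgebraicSystem Q)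
    (h0 : CondI0 Q) :
    (∀ S : Set (Setoid V), (∀ π ∈ S, IsDecomp Q π) →
        IsDecomp Q (sSup S) ∧ IsDecomp Q (sInf S)) ↔ CondI1 Q := by
  constructor
  · intro h A hAQ B hBQ ⟨z, hzA, hzB⟩
    set S : Set (Setoid V) := {blockSetoid A, blockSetoid B} with hS
    have hdec : ∀ π ∈ S, IsDecomp Q π := by
      rintro π (rfl | rfl)
      · exact blockSetoid_decomp h0 hAQ
      · exact blockSetoid_decomp h0 hBQ
    have hkey : sSup S = blockSetoid (A ∪ B) := by
      apply le_antisymm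
      · apply sSup_le
        rintro π (rfl | rfl) <;>
        · intro x y hxy
          rcases hxy with rfl | hxy
          · exact Or.inl rfl
          · exact Or.inr ⟨by simp [hxy.1], by simp [hxy.2]⟩
      · intro x y hxy
        rcases hxy with rfl | ⟨hx, hy⟩
        · exact (sSup S).refl' x
        · have hzs : ∀ w ∈ A ∪ B, (sSup S).r w z := by
            intro w hw
            rcases hw with hw | hw
            · exact le_sSup (show blockSetoid A ∈ S by left; rfl) (Or.inr ⟨hw, hzA⟩)
            · exact le_sSup (show blockSetoid B ∈ S by right; rfl) (Or.inr ⟨hw, hzB⟩)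
          exact (sSup S).trans' (hzs x hx) ((sSup S).symm' (hzs y hy))
    have := (h S hdec).1 z
    rw [hkey] at this
    have heq : {y | (blockSetoid (A ∪ B)).r z y} = A ∪ B := by
      ext y
      simp only [blockSetoid, Set.mem_setOf_eq]
      constructor
      · rintro (rfl | hh)
        · exact Or.inl hzA
        · exact hh.2
      · exact fun hy => Or.inr ⟨Or.inl hzA, hy⟩
    rwa [heq] at this
  · intro h1 S hS
    constructor
    · -- sSup
      intro x
      set C : Set V := {y | (sSup S).r x y} with hCdef
      set W : Set (Set V) := {B | B ∈ Q ∧ x ∈ B ∧ B ⊆ C} with hWdef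
      have hxW : {x} ∈ W := ⟨h0.2 x, rfl, by
        rintro y hy
        cases hy
        exact (sSup S).refl' x⟩
      obtain ⟨M, -, hMmax⟩ := zorn_subset_nonempty W (fun c hcW hchain hcne => by
        refine ⟨⋃₀ c, ⟨hA c (fun s hs => (hcW hs).1) hcne hchain, ?_, ?_⟩,
          fun s hs => Set.subset_sUnion_of_mem hs⟩
        · obtain ⟨s, hs⟩ := hcne
          exact ⟨s, hs, (hcW hs).2.1⟩
        · exact Set.sUnion_subset fun s hs => (hcW hs).2.2) {x} hxW
      obtain ⟨hMQ, hxM, hMC⟩ := hMmax.prop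
      -- saturation
      have hsat : ∀ s ∈ S, ∀ z ∈ M, {y | s.r z y} ⊆ M := by
        intro s hsS z hzM
        set K := {y | s.r z y} with hK
        have hKQ : K ∈ Q := hS s hsS z
        have hKC : K ⊆ C := by
          intro y hy
          exact (sSup S).trans' (hMC hzM) (le_sSup hsS hy)
        have hMK : M ∪ K ∈ W :=
          ⟨h1 M hMQ K hKQ ⟨z, hzM, s.refl' z⟩, Or.inl hxM, Set.union_subset hMC hKC⟩
        have := hMmax.2 hMK Set.subset_union_left
        exact fun y hy => this (Or.inr hy)
      have hCM : C ⊆ M := by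
        intro y hy
        -- build setoid τ : u ~ v iff (u ∈ M ↔ v ∈ M)
        set τ : Setoid V := ⟨fun u v => (u ∈ M ↔ v ∈ M),
          ⟨fun _ => Iff.rfl, fun h => h.symm, fun h1 h2 => h1.trans h2⟩⟩ with hτ
        have hle : sSup S ≤ τ := by
          apply sSup_le
          intro s hsS u v huv
          constructor
          · intro hu
            exact hsat s hsS u hu huv
          · intro hv
            exact hsat s hsS v hv (s.symm' huv)
        exact (hle hy).mp hxM
      have hEq : C = M := le_antisymm hCM hMC
      rw [hEq]; exact hMQ
    · -- sInf
      intro x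
      rcases Set.eq_empty_or_nonempty S with rfl | hSne
      · have : {y | (sInf (∅ : Set (Setoid V))).r x y} = Set.univ := by
          ext y
          simp [Setoid.sInf_iff]
        rw [this]; exact hC.1
      · have : {y | (sInf S).r x y} = ⋂₀ ((fun s : Setoid V => {y | s.r x y}) '' S) := by
          ext y
          simp only [Set.mem_setOf_eq, Set.sInter_image, Set.mem_iInter]
          exact Setoid.sInf_iff
        rw [this]
        exact hC.2 _ (by rintro T ⟨s, hs, rfl⟩; exact hS s hs x) (hSne.image _)
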